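/- If G is a graph with minimum degree δ(G) = 1, then the coalition number satisfies C(G) ≤ 2(Δ(G) + 1), where Δ(G) is the maximum degree of G. -/

import Mathlib

open SimpleGraph

attribute [local instance] Classical.propDecidable

def Dominates {V : Type*} (G : SimpleGraph V) (S : Set V) : Prop :=
  ∀ v, v ∉ S → ∃ u ∈ S, G.Adj u v

def Coalition {V : Type*} (G : SimpleGraph V) (A B : Set V) : Prop :=
  Disjoint A B ∧ ¬ Dominates G A ∧ ¬ Dominates G B ∧ Dominates G (A ∪ B)

def IsCoalitionPartition {V : Type*} (G : SimpleGraph V) (P : Finset (Set V)) : Prop :=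
  (∀ A ∈ P, A.Nonempty) ∧
  (∀ A ∈ P, ∀ B ∈ P, A ≠ B → Disjoint A B) ∧
  (∀ v : V, ∃ A ∈ P, v ∈ A) ∧
  (∀ A ∈ P, (Dominates G A ∧ ∃ v, A = {v}) ∨
    (¬ Dominates G A ∧ ∃ B ∈ P, B ≠ A ∧ Coalition G A B))

noncomputable def coalitionNumber {V : Type*} (G : SimpleGraph V) : ℕ :=
  sSup {n | ∃ P : Finset (Set V), IsCoalitionPartition G P ∧ P.card = n}

def coalitionGraph {V : Type*} (G : SimpleGraph V) (P : Finset (Set V)) :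
    SimpleGraph {A : Set V // A ∈ P} where
  Adj A B := Coalition G A.1 B.1
  symm := by
    constructor
    rintro A B ⟨d, na, nb, u⟩
    exact ⟨d.symm, nb, na, by rwa [Set.union_comm]⟩
  loopless := by
    constructor
    rintro ⟨A, hA⟩ ⟨d, na, nb, u⟩
    rw [Set.union_self] at u
    exact na u

lemma coalition_symm {V : Type*} {G : SimpleGraph V} {A B : Set V}
    (h : Coalition G A B) : Coalition G B A := by
  obtain ⟨d, na, nb, un⟩ := h
  exact ⟨d.symm, nb, na, by rwa [Set.union_comm]⟩

/-- Classes of `P` satisfying `p` are at most `Δ+1` provided each such class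
contains `w` or a neighbor of `w`. -/
lemma card_filter_le_maxDegree {V : Type*} [Fintype V] (G : SimpleGraph V)
    (P : Finset (Set V))
    (hdisj : ∀ A ∈ P, ∀ B ∈ P, A ≠ B → Disjoint A B)
    (w : V) (p : Set V → Prop)
    (h : ∀ B ∈ P, p B → ∃ t ∈ (insert w (G.neighborFinset w) : Finset V), t ∈ B) :
    (P.filter p).card ≤ G.maxDegree + 1 := by
  classical
  set T : Finset V := insert w (G.neighborFinset w) with hT
  have key : ∀ B ∈ P.filter p, ∃ t, t ∈ T ∧ t ∈ B := by
    intro B hB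
    rw [Finset.mem_filter] at hB
    obtain ⟨t, ht, htB⟩ := h B hB.1 hB.2
    exact ⟨t, ht, htB⟩
  set f : Set V → V := fun B => if hB : ∃ t, t ∈ T ∧ t ∈ B then hB.choose else w with hf
  have hfmem : ∀ B ∈ P.filter p, f B ∈ T ∧ f B ∈ B := by
    intro B hB
    have hB' := key B hB
    simp only [hf, dif_pos hB']
    exact hB'.choose_spec
  have hcard : (P.filter p).card ≤ T.card := by
    apply Finset.card_le_card_of_injOn f (fun B hB => (hfmem B hB).1)
    intro B hB B' hB' hfe
    simp only [Finset.coe_filter, Set.mem_setOf_eq] at hB hB'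
    by_contra hne
    have hd := hdisj B hB.1 B' hB'.1 hne
    have h1 := (hfmem B (Finset.mem_filter.mpr hB)).2
    have h2 := (hfmem B' (Finset.mem_filter.mpr hB')).2
    rw [hfe] at h1
    exact Set.disjoint_left.mp hd h1 h2
  calc (P.filter p).card ≤ T.card := hcard
    _ ≤ (G.neighborFinset w).card + 1 := Finset.card_insert_le _ _
    _ ≤ G.maxDegree + 1 := by
        have := G.degree_le_maxDegree w
        rw [SimpleGraph.degree] at this
        omega

theorem stmt5 {V : Type*} [Fintype V] (G : SimpleGraph V)
    (hδ : G.minDegree = 1) :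
    coalitionNumber G ≤ 2 * (G.maxDegree + 1) := by
  classical
  have hV : Nonempty V := by
    by_contra h
    rw [not_nonempty_iff] at h
    rw [SimpleGraph.minDegree] at hδ
    simp [Finset.univ_eq_empty] at hδ
  obtain ⟨v, hv⟩ := G.exists_minimal_degree_vertex
  rw [hδ] at hv
  have hdeg : (G.neighborFinset v).card = 1 := hv.symm
  obtain ⟨u, hu⟩ := Finset.card_eq_one.mp hdeg
  have hadj : G.Adj v u := by
    rw [← SimpleGraph.mem_neighborFinset, hu]; exact Finset.mem_singleton_self u
  have huniq : ∀ x, G.Adj x v → x = u := by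
    intro x hx
    have : x ∈ G.neighborFinset v := by
      rw [SimpleGraph.mem_neighborFinset]; exact hx.symm
    rwa [hu, Finset.mem_singleton] at this
  -- any dominating set contains v or u
  have hdom : ∀ S : Set V, Dominates G S → v ∈ S ∨ u ∈ S := by
    intro S hS
    by_cases hvS : v ∈ S
    · exact Or.inl hvS
    · obtain ⟨x, hxS, hx⟩ := hS v hvS
      right; rwa [huniq x hx] at hxS
  have hΔ : 1 ≤ G.maxDegree := by
    have := G.degree_le_maxDegree v
    rw [SimpleGraph.degree, hdeg] at this
    exact this
  apply csSup_le'
  rintro n ⟨P, hP, rfl⟩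
  obtain ⟨hne, hdisj, hcov, hstr⟩ := hP
  -- containment classes of v and u
  obtain ⟨X, hXP, hvX⟩ := hcov v
  obtain ⟨Y, hYP, huY⟩ := hcov u
  have hsame : ∀ A ∈ P, ∀ B ∈ P, ∀ x : V, x ∈ A → x ∈ B → A = B := by
    intro A hA B hB x hxA hxB
    by_contra hne'
    exact Set.disjoint_left.mp (hdisj A hA B hB hne') hxA hxB
  -- every class other than X, Y forms a coalition with X or with Y
  have hstruct : ∀ A ∈ P, A ≠ X → A ≠ Y → Coalition G X A ∨ Coalition G Y A := by
    intro A hAP hAX hAY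
    rcases hstr A hAP with ⟨hdomA, w', rfl⟩ | ⟨hnd, B, hBP, hBA, hco⟩
    · rcases hdom _ hdomA with hv' | hu'
      · exact absurd (hsame _ hAP _ hXP v hv' hvX) hAX
      · exact absurd (hsame _ hAP _ hYP u hu' huY) hAY
    · rcases hdom _ hco.2.2.2 with hv' | hu'
      · rcases hv' with hv' | hv'
        · exact absurd (hsame _ hAP _ hXP v hv' hvX) hAX
        · have : B = X := hsame _ hBP _ hXP v hv' hvX
          exact Or.inl (this ▸ coalition_symm hco)
      · rcases hu' with hu' | hu'
        · exact absurd (hsame _ hAP _ hYP u hu' huY) hAY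
        · have : B = Y := hsame _ hBP _ hYP u hu' huY
          exact Or.inr (this ▸ coalition_symm hco)
  -- witness extraction for non-dominating sets
  have hwit : ∀ A : Set V, ¬ Dominates G A → ∃ w : V, w ∉ A ∧ ∀ x ∈ A, ¬ G.Adj x w := by
    intro A hA
    rw [Dominates] at hA
    push_neg at hA
    obtain ⟨w, hw1, hw2⟩ := hA
    exact ⟨w, hw1, fun x hx h => hw2 x hx h⟩
  -- partners land on witnesses
  have hland : ∀ (A : Set V) (w : V), w ∉ A → (∀ x ∈ A, ¬ G.Adj x w) →
      ∀ B : Set V, Coalition G A B →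
      ∃ t ∈ (insert w (G.neighborFinset w) : Finset V), t ∈ B := by
    intro A w hw1 hw2 B hco
    by_cases hwB : w ∈ A ∪ B
    · rcases hwB with h | h
      · exact absurd h hw1
      · exact ⟨w, Finset.mem_insert_self _ _, h⟩
    · obtain ⟨x, hx, hadjx⟩ := hco.2.2.2 w hwB
      rcases hx with h | h
      · exact absurd hadjx (hw2 x h)
      · refine ⟨x, ?_, h⟩
        rw [Finset.mem_insert, SimpleGraph.mem_neighborFinset]
        exact Or.inr hadjx.symm
  by_cases hXY : X = Y
  · -- v and u in the same class
    subst hXY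
    by_cases hDX : Dominates G X
    · have hsub : P ⊆ {X} := by
        intro A hA
        rw [Finset.mem_singleton]
        by_contra hAX
        rcases hstruct A hA hAX hAX with h | h <;> exact h.2.1 hDX
      calc P.card ≤ ({X} : Finset (Set V)).card := Finset.card_le_card hsub
        _ = 1 := Finset.card_singleton _
        _ ≤ 2 * (G.maxDegree + 1) := by omega
    · obtain ⟨w, hw1, hw2⟩ := hwit X hDX
      have hsub : P ⊆ insert X (P.filter (fun B => Coalition G X B)) := by
        intro A hA
        rw [Finset.mem_insert]
        by_cases hAX : A = X
        · exact Or.inl hAX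
        · rcases hstruct A hA hAX hAX with h | h <;>
            exact Or.inr (Finset.mem_filter.mpr ⟨hA, h⟩)
      have hcf : (P.filter (fun B => Coalition G X B)).card ≤ G.maxDegree + 1 :=
        card_filter_le_maxDegree G P hdisj w _
          (fun B _ hB => hland X w hw1 hw2 B hB)
      calc P.card ≤ (insert X (P.filter (fun B => Coalition G X B))).card :=
            Finset.card_le_card hsub
        _ ≤ (P.filter (fun B => Coalition G X B)).card + 1 := Finset.card_insert_le _ _
        _ ≤ 2 * (G.maxDegree + 1) := by omega
  · -- X ≠ Y
    by_cases hDX : Dominates G X <;> by_cases hDY : Dominates G Y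
    · -- both dominate
      have hsub : P ⊆ {X, Y} := by
        intro A hA
        rw [Finset.mem_insert, Finset.mem_singleton]
        by_contra hAXY
        push_neg at hAXY
        rcases hstruct A hA hAXY.1 hAXY.2 with h | h
        · exact h.2.1 hDX
        · exact h.2.1 hDY
      calc P.card ≤ ({X, Y} : Finset (Set V)).card := Finset.card_le_card hsub
        _ ≤ 2 := Finset.card_le_two ..
        _ ≤ 2 * (G.maxDegree + 1) := by omega
    · -- X dominates, Y does not
      obtain ⟨w, hw1, hw2⟩ := hwit Y hDY
      have hsub : P ⊆ insert X (insert Y (P.filter (fun B => Coalition G Y B))) := by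
        intro A hA
        rw [Finset.mem_insert, Finset.mem_insert]
        by_cases hAX : A = X
        · exact Or.inl hAX
        by_cases hAY : A = Y
        · exact Or.inr (Or.inl hAY)
        rcases hstruct A hA hAX hAY with h | h
        · exact absurd hDX h.2.1
        · exact Or.inr (Or.inr (Finset.mem_filter.mpr ⟨hA, h⟩))
      have hcf : (P.filter (fun B => Coalition G Y B)).card ≤ G.maxDegree + 1 :=
        card_filter_le_maxDegree G P hdisj w _
          (fun B _ hB => hland Y w hw1 hw2 B hB)
      calc P.card ≤ _ := Finset.card_le_card hsub
        _ ≤ (insert Y (P.filter (fun B => Coalition G Y B))).card + 1 :=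
            Finset.card_insert_le _ _
        _ ≤ (P.filter (fun B => Coalition G Y B)).card + 1 + 1 := by
            have := Finset.card_insert_le Y (P.filter (fun B => Coalition G Y B))
            omega
        _ ≤ 2 * (G.maxDegree + 1) := by omega
    · -- Y dominates, X does not
      obtain ⟨w, hw1, hw2⟩ := hwit X hDX
      have hsub : P ⊆ insert Y (insert X (P.filter (fun B => Coalition G X B))) := by
        intro A hA
        rw [Finset.mem_insert, Finset.mem_insert]
        by_cases hAY : A = Y
        · exact Or.inl hAY
        by_cases hAX : A = X
        · exact Or.inr (Or.inl hAX)
        rcases hstruct A hA hAX hAY with h | h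
        · exact Or.inr (Or.inr (Finset.mem_filter.mpr ⟨hA, h⟩))
        · exact absurd hDY h.2.1
      have hcf : (P.filter (fun B => Coalition G X B)).card ≤ G.maxDegree + 1 :=
        card_filter_le_maxDegree G P hdisj w _
          (fun B _ hB => hland X w hw1 hw2 B hB)
      calc P.card ≤ _ := Finset.card_le_card hsub
        _ ≤ (insert X (P.filter (fun B => Coalition G X B))).card + 1 :=
            Finset.card_insert_le _ _
        _ ≤ (P.filter (fun B => Coalition G X B)).card + 1 + 1 := by
            have := Finset.card_insert_le X (P.filter (fun B => Coalition G X B))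
            omega
        _ ≤ 2 * (G.maxDegree + 1) := by omega
    · -- neither dominates
      have hdXY : Disjoint X Y := hdisj X hXP Y hYP hXY
      by_cases hD : Dominates G (X ∪ Y)
      · -- X and Y form a coalition with each other
        have hcoXY : Coalition G X Y := ⟨hdXY, hDX, hDY, hD⟩
        obtain ⟨wX, hwX1, hwX2⟩ := hwit X hDX
        obtain ⟨wY, hwY1, hwY2⟩ := hwit Y hDY
        set fX := P.filter (fun B => Coalition G X B) with hfX
        set fY := P.filter (fun B => Coalition G Y B) with hfY
        have hYfX : Y ∈ fX := Finset.mem_filter.mpr ⟨hYP, hcoXY⟩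
        have hXfY : X ∈ fY := Finset.mem_filter.mpr ⟨hXP, coalition_symm hcoXY⟩
        have hcfX : fX.card ≤ G.maxDegree + 1 :=
          card_filter_le_maxDegree G P hdisj wX _
            (fun B _ hB => hland X wX hwX1 hwX2 B hB)
        have hcfY : fY.card ≤ G.maxDegree + 1 :=
          card_filter_le_maxDegree G P hdisj wY _
            (fun B _ hB => hland Y wY hwY1 hwY2 B hB)
        have hsub : P ⊆ ({X, Y} : Finset (Set V)) ∪ (fX.erase Y) ∪ (fY.erase X) := by
          intro A hA
          rw [Finset.mem_union, Finset.mem_union, Finset.mem_insert, Finset.mem_singleton]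
          by_cases hAX : A = X
          · exact Or.inl (Or.inl (Or.inl hAX))
          by_cases hAY : A = Y
          · exact Or.inl (Or.inl (Or.inr hAY))
          rcases hstruct A hA hAX hAY with h | h
          · exact Or.inl (Or.inr (Finset.mem_erase.mpr ⟨hAY, Finset.mem_filter.mpr ⟨hA, h⟩⟩))
          · exact Or.inr (Finset.mem_erase.mpr ⟨hAX, Finset.mem_filter.mpr ⟨hA, h⟩⟩)
        have heX : (fX.erase Y).card ≤ G.maxDegree := by
          rw [Finset.card_erase_of_mem hYfX]
          omega
        have heY : (fY.erase X).card ≤ G.maxDegree := by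
          rw [Finset.card_erase_of_mem hXfY]
          omega
        calc P.card ≤ _ := Finset.card_le_card hsub
          _ ≤ (({X, Y} : Finset (Set V)) ∪ (fX.erase Y)).card + (fY.erase X).card :=
              Finset.card_union_le _ _
          _ ≤ ({X, Y} : Finset (Set V)).card + (fX.erase Y).card + (fY.erase X).card := by
              have := Finset.card_union_le ({X, Y} : Finset (Set V)) (fX.erase Y)
              omega
          _ ≤ 2 * (G.maxDegree + 1) := by
              have h2 : ({X, Y} : Finset (Set V)).card ≤ 2 := Finset.card_le_two ..
              omega
      · -- X ∪ Y misses some vertex; all partners land near it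
        obtain ⟨w, hw1, hw2⟩ := hwit (X ∪ Y) hD
        have hw1X : w ∉ X := fun h => hw1 (Or.inl h)
        have hw1Y : w ∉ Y := fun h => hw1 (Or.inr h)
        have hw2X : ∀ x ∈ X, ¬ G.Adj x w := fun x hx => hw2 x (Or.inl hx)
        have hw2Y : ∀ x ∈ Y, ¬ G.Adj x w := fun x hx => hw2 x (Or.inr hx)
        set fXY := P.filter (fun B => Coalition G X B ∨ Coalition G Y B) with hfXY
        have hcf : fXY.card ≤ G.maxDegree + 1 := by
          rw [hfXY]
          have hgen := card_filter_le_maxDegree G P hdisj w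
              (fun B => Coalition G X B ∨ Coalition G Y B) (by
            rintro B _ (hB | hB)
            · exact hland X w hw1X hw2X B hB
            · exact hland Y w hw1Y hw2Y B hB)
          convert hgen using 3
        have hsub : P ⊆ ({X, Y} : Finset (Set V)) ∪ fXY := by
          intro A hA
          rw [Finset.mem_union, Finset.mem_insert, Finset.mem_singleton]
          by_cases hAX : A = X
          · exact Or.inl (Or.inl hAX)
          by_cases hAY : A = Y
          · exact Or.inl (Or.inr hAY)
          exact Or.inr (Finset.mem_filter.mpr ⟨hA, hstruct A hA hAX hAY⟩)
        calc P.card ≤ _ := Finset.card_le_card hsub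
          _ ≤ ({X, Y} : Finset (Set V)).card + fXY.card := Finset.card_union_le _ _
          _ ≤ 2 * (G.maxDegree + 1) := by
              have h2 : ({X, Y} : Finset (Set V)).card ≤ 2 := Finset.card_le_two ..
              omega
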